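/- Let A be a WAP-algebra and let B be a norm-closed subalgebra of A. Then B (with the restricted norm) is a WAP-algebra. -/

import Mathlib

noncomputable section
open Metric Set Function ContinuousLinearMap NormedSpace

section WAPDefs

variable (B : Type*) [NormedAddCommGroup B] [NormedSpace ℂ B]

/-- The set of weakly almost periodic functionals on a Banach space `B` equipped with a
continuous bilinear multiplication `m`: those `f` in the dual for which the orbit
`{f · a : ‖a‖ ≤ 1}` (where `(f · a)(b) = f (a * b)`) is relatively compact in the weak
topology `σ(B*, B**)` of the dual `B*`. -/
def WAPset (m : B →L[ℂ] B →L[ℂ] B) : Set (StrongDual ℂ B) :=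
  {f | IsCompact (closure
    ((fun a => toWeakSpace ℂ (StrongDual ℂ B) (f.comp (m a))) '' closedBall (0 : B) 1))}

/-- The WAP-seminorm `‖a‖_WAP = sup {|f a| : f ∈ WAP(B), ‖f‖ ≤ 1}`. -/
def wapNorm (m : B →L[ℂ] B →L[ℂ] B) (a : B) : ℝ :=
  sSup {r : ℝ | ∃ f ∈ WAPset B m, ‖f‖ ≤ 1 ∧ r = ‖f a‖}

/-- `B` (with multiplication `m`) is a WAP-algebra when the canonical map into `WAP(B)*`
is bounded below, i.e. `sup {|f a| : f ∈ WAP(B), ‖f‖ ≤ 1} ≥ c ‖a‖` for some `c > 0`. -/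
def IsWAPAlgebra (m : B →L[ℂ] B →L[ℂ] B) : Prop :=
  ∃ c > 0, ∀ a : B, c * ‖a‖ ≤ wapNorm B m a

instance (X : Submodule ℂ (StrongDual ℂ B)) : SeminormedAddCommGroup X := inferInstance

instance (X : Submodule ℂ (StrongDual ℂ B)) : NormedSpace ℂ X := inferInstance

/-- The canonical evaluation map from `B` into the dual of a subspace `X ⊆ B*`. -/
def dualEval (X : Submodule ℂ (StrongDual ℂ B)) (a : B) : StrongDual ℂ X :=
  (inclusionInDoubleDual ℂ B a).comp X.subtypeL

/-- `B` (with multiplication `m`) is a dual Banach algebra with predual `X`: `X` is a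
norm-closed subspace of `B*` which is a sub-bimodule for the actions `(f·b)(c) = f (b * c)`
and `(b·f)(c) = f (c * b)`, and the canonical evaluation map `B → X*` is an isometric
isomorphism. -/
structure IsDualBanachAlgebra (m : B →L[ℂ] B →L[ℂ] B)
    (X : Submodule ℂ (StrongDual ℂ B)) : Prop where
  closed : IsClosed (X : Set (StrongDual ℂ B))
  rmod : ∀ f ∈ X, ∀ b : B, f.comp (m b) ∈ X
  lmod : ∀ f ∈ X, ∀ b : B, f.comp (m.flip b) ∈ X
  isometric : ∀ b : B, ‖dualEval B X b‖ = ‖b‖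
  surjective : Function.Surjective (dualEval B X)

end WAPDefs

instance (A : Type*) [NonUnitalNormedRing A] [NormedSpace ℂ A] (S : NonUnitalSubalgebra ℂ A) : NormedSpace ℂ S := SubmoduleClass.toNormedSpace (R := ℂ) S

/-- The weak topology on a normed space over `ℂ` is Hausdorff, since the dual separates points. -/
theorem weakSpace_t2 (E : Type*) [NormedAddCommGroup E] [NormedSpace ℂ E] :
    T2Space (WeakSpace ℂ E) := by
  have h : Function.Injective (topDualPairing ℂ E).flip := by
    intro x y hxy
    refine (NormedSpace.eq_iff_forall_dual_eq ℂ).mpr fun g => ?_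
    exact congrArg (fun φ => φ g) hxy
  exact (WeakBilin.isEmbedding (B := (topDualPairing ℂ E).flip) h).t2Space

set_option maxHeartbeats 1000000 in
/-- A norm-closed subalgebra of a WAP-algebra is a WAP-algebra. -/
theorem isWAPAlgebra_of_closed_subalgebra (A : Type*) [NonUnitalNormedRing A] [NormedSpace ℂ A] [IsScalarTower ℂ A A] [SMulCommClass ℂ A A] [CompleteSpace A]
    (hA : IsWAPAlgebra A (ContinuousLinearMap.mul ℂ A))
    (S : NonUnitalSubalgebra ℂ A) (hS : IsClosed (S : Set A)) :
    IsWAPAlgebra S (ContinuousLinearMap.mul ℂ S) := by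
  have tA := weakSpace_t2 (StrongDual ℂ A)
  have tS := weakSpace_t2 (StrongDual ℂ S)
  obtain ⟨c, hc, hbound⟩ := hA
  -- the inclusion as a continuous linear map
  let ι : S →L[ℂ] A :=
    ⟨{ toFun := Subtype.val, map_add' := fun _ _ => rfl, map_smul' := fun _ _ => rfl },
      continuous_subtype_val⟩
  have hι : ∀ b : S, ‖ι b‖ = ‖b‖ := fun _ => rfl
  -- restriction of functionals
  let R : StrongDual ℂ A →L[ℂ] StrongDual ℂ S := (ContinuousLinearMap.compL ℂ S A ℂ).flip ι
  have hR : ∀ (f : StrongDual ℂ A) (b : S), R f b = f (ι b) := fun _ _ => rfl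
  -- restriction maps WAP(A) into WAP(S)
  have key : ∀ f ∈ WAPset A (ContinuousLinearMap.mul ℂ A),
      R f ∈ WAPset S (ContinuousLinearMap.mul ℂ S) := by
    intro f hf
    let Rw : WeakSpace ℂ (StrongDual ℂ A) →L[ℂ] WeakSpace ℂ (StrongDual ℂ S) := WeakSpace.map R
    set K := closure ((fun a => toWeakSpace ℂ (StrongDual ℂ A)
      (f.comp (ContinuousLinearMap.mul ℂ A a))) '' closedBall (0 : A) 1) with hK
    have hKc : IsCompact (Rw '' K) := hf.image Rw.continuous
    have hsub : ((fun b => toWeakSpace ℂ (StrongDual ℂ S)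
        ((R f).comp (ContinuousLinearMap.mul ℂ S b))) '' closedBall (0 : S) 1) ⊆ Rw '' K := by
      rintro - ⟨b, hb, rfl⟩
      refine ⟨toWeakSpace ℂ (StrongDual ℂ A) (f.comp (ContinuousLinearMap.mul ℂ A (ι b))),
        subset_closure ⟨ι b, ?_, rfl⟩, ?_⟩
      · simpa only [mem_closedBall, dist_zero_right, hι] using hb
      · have : R (f.comp (ContinuousLinearMap.mul ℂ A (ι b)))
            = (R f).comp (ContinuousLinearMap.mul ℂ S b) := by
          ext c
          show f (ι b * ι c) = f (ι (b * c))
          rfl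
        show Rw (toWeakSpace ℂ (StrongDual ℂ A) (f.comp (ContinuousLinearMap.mul ℂ A (ι b))))
            = toWeakSpace ℂ (StrongDual ℂ S) ((R f).comp (ContinuousLinearMap.mul ℂ S b))
        rw [← this]
        rfl
    exact hKc.of_isClosed_subset isClosed_closure (closure_minimal hsub hKc.isClosed)
  -- `0` is always weakly almost periodic
  have h0 : (0 : StrongDual ℂ A) ∈ WAPset A (ContinuousLinearMap.mul ℂ A) := by
    have himg : ((fun a => toWeakSpace ℂ (StrongDual ℂ A)
        ((0 : StrongDual ℂ A).comp (ContinuousLinearMap.mul ℂ A a))) '' closedBall (0 : A) 1)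
        = {toWeakSpace ℂ (StrongDual ℂ A) 0} := by
      have : (fun a => toWeakSpace ℂ (StrongDual ℂ A)
          ((0 : StrongDual ℂ A).comp (ContinuousLinearMap.mul ℂ A a)))
          = fun _ : A => toWeakSpace ℂ (StrongDual ℂ A) 0 := by
        funext a
        simp only [ContinuousLinearMap.zero_comp]
      rw [this]
      exact Set.Nonempty.image_const ⟨0, mem_closedBall_self zero_le_one⟩ _
    rw [WAPset, Set.mem_setOf_eq, himg, closure_singleton]
    exact isCompact_singleton
  -- norm of the inclusion
  have hιnorm : ‖ι‖ ≤ 1 := ContinuousLinearMap.opNorm_le_bound _ zero_le_one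
    (fun b => by rw [hι, one_mul])
  refine ⟨c, hc, fun a => ?_⟩
  have h1 : c * ‖a‖ ≤ wapNorm A (ContinuousLinearMap.mul ℂ A) (ι a) := by
    simpa only [hι] using hbound (ι a)
  refine h1.trans (csSup_le_csSup ?_ ?_ ?_)
  · refine ⟨‖a‖, ?_⟩
    rintro r ⟨g, _, hg1, rfl⟩
    calc ‖g a‖ ≤ ‖g‖ * ‖a‖ := g.le_opNorm a
      _ ≤ 1 * ‖a‖ := by gcongr
      _ = ‖a‖ := one_mul _
  · exact ⟨0, 0, h0, by simp, by simp⟩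
  · rintro r ⟨f, hf, hf1, rfl⟩
    have hRf1 : ‖R f‖ ≤ 1 := by
      refine ContinuousLinearMap.opNorm_le_bound _ zero_le_one fun b => ?_
      calc ‖R f b‖ = ‖f (ι b)‖ := by rw [hR]
        _ ≤ ‖f‖ * ‖ι b‖ := f.le_opNorm _
        _ ≤ 1 * ‖b‖ := by rw [hι]; gcongr
        _ = 1 * ‖b‖ := rfl
    have hval : ‖f (ι a)‖ = ‖R f a‖ := by rw [hR]
    exact ⟨R f, key f hf, hRf1, hval⟩
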